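/- The function β(y) = √(2/π)((32/9)y⁶ - (31/3)y⁴ + (15/2)y² - 37/48) e^{-2y²} satisfies the differential equation 0 = d/dy(y β(y)) + (1/4) β''(y) + √(2/π)((64/3)y⁶ - 68y⁴ + 46y² - 15/4) e^{-2y²}, and ∫_ℝ β(y) dy = 0. -/

import Mathlib

open Real

noncomputable def β : ℝ → ℝ := fun y =>
  Real.sqrt (2 / π) * ((32 / 9) * y ^ 6 - (31 / 3) * y ^ 4 + (15 / 2) * y ^ 2 - 37 / 48) *
    Real.exp (-2 * y ^ 2)

private lemma hasDerivAt_poly_exp (p : ℝ → ℝ) (d : ℝ) (y : ℝ)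
    (hp : HasDerivAt p d y) :
    HasDerivAt (fun z => Real.sqrt (2 / π) * p z * Real.exp (-2 * z ^ 2))
      (Real.sqrt (2 / π) * (d - 4 * y * p y) * Real.exp (-2 * y ^ 2)) y := by
  have h2 : HasDerivAt (fun z : ℝ => -2 * z ^ 2) (-4 * y) y := by
    have := (hasDerivAt_pow 2 y).const_mul (-2 : ℝ)
    convert this using 1 <;> (try rfl)
    push_cast; ring
  have he := h2.exp
  have := (hp.const_mul (Real.sqrt (2 / π))).mul he
  convert this using 1 <;> (try rfl)
  ring

private lemma tendsto_pow_exp (n : ℕ) :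
    Filter.Tendsto (fun y : ℝ => y ^ n * Real.exp (-2 * y ^ 2)) Filter.atTop (nhds 0) := by
  apply squeeze_zero' (g := fun y : ℝ => y ^ n * Real.exp (-y))
  · filter_upwards [Filter.eventually_ge_atTop (0 : ℝ)] with y hy
    positivity
  · filter_upwards [Filter.eventually_ge_atTop (1 : ℝ)] with y hy
    apply mul_le_mul_of_nonneg_left _ (by positivity)
    apply Real.exp_le_exp.2
    nlinarith
  · exact Real.tendsto_pow_mul_exp_neg_atTop_nhds_zero n

private lemma int_pow (n : ℕ) :
    MeasureTheory.Integrable (fun x : ℝ => x ^ n * Real.exp (-2 * x ^ 2)) := by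
  have h := integrable_rpow_mul_exp_neg_mul_sq (b := 2) two_pos
    (s := (n : ℝ)) (lt_of_lt_of_le (by norm_num) (Nat.cast_nonneg n))
  simpa [Real.rpow_natCast] using h

/-- Second-order correction for the Ulam map. -/
theorem second_order_correction_Ulam :
    (∀ y : ℝ, 0 = deriv (fun z => z * β z) y + (1 / 4) * deriv (deriv β) y +
        Real.sqrt (2 / π) * ((64 / 3) * y ^ 6 - 68 * y ^ 4 + 46 * y ^ 2 - 15 / 4) *
          Real.exp (-2 * y ^ 2)) ∧
    ∫ y : ℝ, β y = 0 := by
  -- first derivative of β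
  have hβ : ∀ y : ℝ, HasDerivAt β
      (Real.sqrt (2 / π) *
        ((-128 / 9) * y ^ 7 + (188 / 3) * y ^ 5 - (214 / 3) * y ^ 3 + (217 / 12) * y) *
        Real.exp (-2 * y ^ 2)) y := by
    intro y
    have hp : HasDerivAt (fun z : ℝ =>
        (32 / 9) * z ^ 6 - (31 / 3) * z ^ 4 + (15 / 2) * z ^ 2 - 37 / 48)
        ((64 / 3) * y ^ 5 - (124 / 3) * y ^ 3 + 15 * y) y := by
      have h := ((((hasDerivAt_pow 6 y).const_mul ((32 : ℝ) / 9)).sub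
        ((hasDerivAt_pow 4 y).const_mul ((31 : ℝ) / 3))).add
        ((hasDerivAt_pow 2 y).const_mul ((15 : ℝ) / 2))).sub_const ((37 : ℝ) / 48)
      convert h using 1 <;> (try rfl) <;> (try funext z) <;> (push_cast; ring)
    have h := hasDerivAt_poly_exp _ _ y hp
    convert h using 1 <;> (try rfl)
    ring
  have hderivβ : deriv β = fun y : ℝ =>
      Real.sqrt (2 / π) *
        ((-128 / 9) * y ^ 7 + (188 / 3) * y ^ 5 - (214 / 3) * y ^ 3 + (217 / 12) * y) *
        Real.exp (-2 * y ^ 2) := funext fun y => (hβ y).deriv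
  -- second derivative of β
  have hg : ∀ y : ℝ, HasDerivAt (fun y : ℝ =>
      Real.sqrt (2 / π) *
        ((-128 / 9) * y ^ 7 + (188 / 3) * y ^ 5 - (214 / 3) * y ^ 3 + (217 / 12) * y) *
        Real.exp (-2 * y ^ 2))
      (Real.sqrt (2 / π) *
        (((-896 / 9) * y ^ 6 + (940 / 3) * y ^ 4 - 214 * y ^ 2 + 217 / 12) -
        4 * y * ((-128 / 9) * y ^ 7 + (188 / 3) * y ^ 5 - (214 / 3) * y ^ 3 + (217 / 12) * y)) *
        Real.exp (-2 * y ^ 2)) y := by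
    intro y
    apply hasDerivAt_poly_exp
    have h := ((((hasDerivAt_pow 7 y).const_mul ((-128 : ℝ) / 9)).add
      ((hasDerivAt_pow 5 y).const_mul ((188 : ℝ) / 3))).sub
      ((hasDerivAt_pow 3 y).const_mul ((214 : ℝ) / 3))).add
      ((hasDerivAt_pow 1 y).const_mul ((217 : ℝ) / 12))
    convert h using 1 <;> (try rfl) <;> (try funext z) <;> (push_cast [Pi.add_apply, Pi.sub_apply]; ring)
  constructor
  · intro y
    have h1 : HasDerivAt (fun z : ℝ => z * β z)
        (1 * β y + y * (Real.sqrt (2 / π) *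
          ((-128 / 9) * y ^ 7 + (188 / 3) * y ^ 5 - (214 / 3) * y ^ 3 +
          (217 / 12) * y) * Real.exp (-2 * y ^ 2))) y := (hasDerivAt_id y).mul (hβ y)
    rw [h1.deriv, hderivβ, (hg y).deriv]
    simp only [β]
    ring
  · -- the integral
    set G : ℝ → ℝ := fun y =>
      Real.sqrt (2 / π) * ((-8 / 9) * y ^ 5 + (53 / 36) * y ^ 3 - (37 / 48) * y) *
        Real.exp (-2 * y ^ 2) with hGdef
    have hG : ∀ y : ℝ, HasDerivAt G (β y) y := by
      intro y
      have hp : HasDerivAt (fun z : ℝ => (-8 / 9) * z ^ 5 + (53 / 36) * z ^ 3 - (37 / 48) * z)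
          ((-40 / 9) * y ^ 4 + (53 / 12) * y ^ 2 - 37 / 48) y := by
        have h := (((hasDerivAt_pow 5 y).const_mul ((-8 : ℝ) / 9)).add
          ((hasDerivAt_pow 3 y).const_mul ((53 : ℝ) / 36))).sub
          ((hasDerivAt_pow 1 y).const_mul ((37 : ℝ) / 48))
        convert h using 1 <;> (try rfl) <;> (try funext z) <;> (push_cast [Pi.add_apply, Pi.sub_apply]; ring)
      have h := hasDerivAt_poly_exp _ _ y hp
      convert h using 1 <;> (try rfl)
      simp only [β]
      ring
    have htop : Filter.Tendsto G Filter.atTop (nhds 0) := by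
      have hGeq : G = fun y : ℝ =>
          (Real.sqrt (2 / π) * (-8 / 9)) * (y ^ 5 * Real.exp (-2 * y ^ 2)) +
          (Real.sqrt (2 / π) * (53 / 36)) * (y ^ 3 * Real.exp (-2 * y ^ 2)) -
          (Real.sqrt (2 / π) * (37 / 48)) * (y ^ 1 * Real.exp (-2 * y ^ 2)) := by
        funext y; simp only [hGdef]; ring
      rw [hGeq]
      have h := (((tendsto_pow_exp 5).const_mul (Real.sqrt (2 / π) * (-8 / 9))).add
        ((tendsto_pow_exp 3).const_mul (Real.sqrt (2 / π) * (53 / 36)))).sub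
        ((tendsto_pow_exp 1).const_mul (Real.sqrt (2 / π) * (37 / 48)))
      simpa using h
    have hbot : Filter.Tendsto G Filter.atBot (nhds 0) := by
      have hodd : ∀ y : ℝ, G (-y) = -G y := by
        intro y
        simp only [hGdef]
        rw [show (-2 * (-y) ^ 2 : ℝ) = -2 * y ^ 2 by ring]
        ring
      have h2 : Filter.Tendsto (fun y : ℝ => G (-y)) Filter.atTop (nhds 0) := by
        have := htop.neg
        simp only [neg_zero] at this
        exact this.congr fun y => (hodd y).symm
      have h3 := h2.comp Filter.tendsto_neg_atBot_atTop
      exact h3.congr fun y => by simp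
    have hint : MeasureTheory.Integrable β := by
      have hβeq : β = fun y : ℝ =>
          (Real.sqrt (2 / π) * (32 / 9)) * (y ^ 6 * Real.exp (-2 * y ^ 2)) -
          (Real.sqrt (2 / π) * (31 / 3)) * (y ^ 4 * Real.exp (-2 * y ^ 2)) +
          (Real.sqrt (2 / π) * (15 / 2)) * (y ^ 2 * Real.exp (-2 * y ^ 2)) -
          (Real.sqrt (2 / π) * (37 / 48)) * (y ^ 0 * Real.exp (-2 * y ^ 2)) := by
        funext y; simp only [β]; ring
      rw [hβeq]
      exact ((((int_pow 6).const_mul _).sub ((int_pow 4).const_mul _)).add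
        ((int_pow 2).const_mul _)).sub ((int_pow 0).const_mul _)
    have h1 : ∫ y in Set.Ioi (0 : ℝ), β y = 0 - G 0 :=
      MeasureTheory.integral_Ioi_of_hasDerivAt_of_tendsto' (fun x _ => hG x)
        hint.integrableOn htop
    have h2 : ∫ y in Set.Iic (0 : ℝ), β y = G 0 - 0 :=
      MeasureTheory.integral_Iic_of_hasDerivAt_of_tendsto' (fun x _ => hG x)
        hint.integrableOn hbot
    have hG0 : G 0 = 0 := by simp [hGdef]
    rw [← intervalIntegral.integral_Iic_add_Ioi hint.integrableOn hint.integrableOn, h1, h2, hG0]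
    ring
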